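/- For any positive integer n, n divides Σ_{d|n} (2^(n/d - 1) - 1)·φ(d) when n is odd. -/

import Mathlib

open Finset

/-- Fermat: `p ∣ a^p - a` in ℤ. -/
lemma fermat_int (p : ℕ) (hp : p.Prime) (a : ℤ) : (p : ℤ) ∣ a ^ p - a := by
  haveI : Fact p.Prime := ⟨hp⟩
  have : ((a ^ p - a : ℤ) : ZMod p) = 0 := by
    push_cast
    rw [ZMod.pow_card]
    ring
  exact (ZMod.intCast_zmod_eq_zero_iff_dvd _ _).mp this

lemma chain_pow (p : ℕ) (hp : p.Prime) (a : ℤ) (j l : ℕ) (h : j ≤ l) :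
    ((p : ℤ)) ^ (j + 1) ∣ a ^ p ^ l - a ^ p ^ j := by
  induction l, h using Nat.le_induction with
  | base => simp
  | succ l hjl ih =>
    have h1 : ((p : ℤ)) ^ (l + 1) ∣ a ^ p ^ (l + 1) - a ^ p ^ l := by
      have := dvd_sub_pow_of_dvd_sub (fermat_int p hp a) l
      rwa [← pow_mul, ← pow_succ'] at this
    have h2 : ((p : ℤ)) ^ (j + 1) ∣ a ^ p ^ (l + 1) - a ^ p ^ l :=
      dvd_trans (pow_dvd_pow _ (by omega)) h1
    have := dvd_add h2 ih
    simpa using this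

lemma key_pp (p k : ℕ) (hp : p.Prime) (a : ℤ) :
    ((p ^ k : ℕ) : ℤ) ∣ ∑ d ∈ (p ^ k).divisors, (Nat.totient d : ℤ) * a ^ (p ^ k / d) := by
  have hsum : ∑ d ∈ (p ^ k).divisors, (Nat.totient d : ℤ) * a ^ (p ^ k / d)
      = (∑ d ∈ (p ^ k).divisors, (Nat.totient d : ℤ) * (a ^ (p ^ k / d) - a ^ p ^ k))
        + ((p ^ k : ℕ) : ℤ) * a ^ p ^ k := by
    have hcongr : ∀ d ∈ (p ^ k).divisors,
        (Nat.totient d : ℤ) * a ^ (p ^ k / d)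
          = (Nat.totient d : ℤ) * (a ^ (p ^ k / d) - a ^ p ^ k)
            + (Nat.totient d : ℤ) * a ^ p ^ k := fun d _ => by ring
    rw [Finset.sum_congr rfl hcongr, Finset.sum_add_distrib, ← Finset.sum_mul]
    congr 2
    norm_cast
    exact Nat.sum_totient _
  rw [hsum]
  refine dvd_add ?_ (Dvd.dvd.mul_right dvd_rfl _)
  rw [Nat.divisors_prime_pow hp, Finset.sum_map]
  apply Finset.dvd_sum
  intro i hi
  simp only [Function.Embedding.coeFn_mk]
  have hik : i ≤ k := by simpa [Nat.lt_succ] using hi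
  have hdiv : p ^ k / p ^ i = p ^ (k - i) := Nat.pow_div hik hp.pos
  rw [hdiv]
  rcases i with _ | s
  · simp
  · have hs1 : s + 1 ≤ k := hik
    have h1 : ((p : ℤ)) ^ s ∣ (Nat.totient (p ^ (s + 1)) : ℤ) := by
      have : (p ^ s : ℕ) ∣ Nat.totient (p ^ (s + 1)) :=
        ⟨p - 1, by simpa using Nat.totient_prime_pow hp (Nat.succ_pos s)⟩
      exact_mod_cast Int.natCast_dvd_natCast.mpr this
    have h2 : ((p : ℤ)) ^ (k - s) ∣ a ^ p ^ (k - (s + 1)) - a ^ p ^ k := by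
      have hc := chain_pow p hp a (k - (s + 1)) k (Nat.sub_le _ _)
      have heq : k - (s + 1) + 1 = k - s := by omega
      rw [heq] at hc
      exact (dvd_sub_comm).mp hc
    have hkpow : ((p ^ k : ℕ) : ℤ) = (p : ℤ) ^ s * (p : ℤ) ^ (k - s) := by
      push_cast
      rw [← pow_add]
      congr 1
      omega
    rw [hkpow]
    exact mul_dvd_mul h1 h2

lemma sum_divisors_coprime_mul {m n : ℕ} (hm : m ≠ 0) (hn : n ≠ 0)
    (hmn : m.Coprime n) (f : ℕ → ℤ) :
    ∑ d ∈ (m * n).divisors, f d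
      = ∑ d1 ∈ m.divisors, ∑ d2 ∈ n.divisors, f (d1 * d2) := by
  rw [← Finset.sum_product']
  refine (Finset.sum_nbij (fun p => p.1 * p.2) ?_ ?_ ?_ ?_).symm
  · rintro ⟨d1, d2⟩ hp
    simp only [Finset.mem_product, Nat.mem_divisors] at hp ⊢
    exact ⟨mul_dvd_mul hp.1.1 hp.2.1, mul_ne_zero hm hn⟩
  · rintro ⟨d1, d2⟩ hp ⟨e1, e2⟩ hq h
    simp only [Finset.mem_coe, Finset.mem_product, Nat.mem_divisors] at hp hq
    simp only at h
    have hd1e2 : Nat.Coprime d1 e2 :=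
      Nat.Coprime.coprime_dvd_left hp.1.1 (Nat.Coprime.coprime_dvd_right hq.2.1 hmn)
    have he1d2 : Nat.Coprime e1 d2 :=
      Nat.Coprime.coprime_dvd_left hq.1.1 (Nat.Coprime.coprime_dvd_right hp.2.1 hmn)
    have hd1 : d1 ∣ e1 := hd1e2.dvd_of_dvd_mul_right (h ▸ Dvd.intro d2 rfl)
    have he1 : e1 ∣ d1 := he1d2.dvd_of_dvd_mul_right (h.symm ▸ Dvd.intro e2 rfl)
    have h11 : d1 = e1 := Nat.dvd_antisymm hd1 he1
    have hd1ne : d1 ≠ 0 := fun h0 => hm (Nat.eq_zero_of_zero_dvd (h0 ▸ hp.1.1))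
    have h22 : d2 = e2 := by
      subst h11
      exact Nat.eq_of_mul_eq_mul_left (Nat.pos_of_ne_zero hd1ne) h
    simp [h11, h22]
  · intro d hd
    simp only [Finset.mem_coe, Nat.mem_divisors] at hd
    obtain ⟨d1, d2, h1, h2, heq⟩ := exists_dvd_and_dvd_of_dvd_mul hd.1
    refine ⟨⟨d1, d2⟩, ?_, heq.symm⟩
    simp only [Finset.mem_coe, Finset.mem_product, Nat.mem_divisors]
    exact ⟨⟨h1, hm⟩, ⟨h2, hn⟩⟩
  · rintro ⟨d1, d2⟩ _
    rfl

/-- The classical necklace congruence. -/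
lemma necklace (n : ℕ) : ∀ a : ℤ,
    (n : ℤ) ∣ ∑ d ∈ n.divisors, (Nat.totient d : ℤ) * a ^ (n / d) := by
  induction n using Nat.recOnPosPrimePosCoprime with
  | prime_pow p k hp hk => exact fun a => key_pp p k hp a
  | zero => simp
  | one => simp
  | coprime m n hm hn hmn ihm ihn =>
    intro a
    have hm0 : m ≠ 0 := by omega
    have hn0 : n ≠ 0 := by omega
    rw [sum_divisors_coprime_mul hm0 hn0 hmn]
    have hrw : ∀ d1 ∈ m.divisors, ∀ d2 ∈ n.divisors,
        (Nat.totient (d1 * d2) : ℤ) * a ^ (m * n / (d1 * d2))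
          = (Nat.totient d2 : ℤ) *
            ((Nat.totient d1 : ℤ) * (a ^ (n / d2)) ^ (m / d1)) := by
      intro d1 h1 d2 h2
      rw [Nat.mem_divisors] at h1 h2
      have hc : Nat.Coprime d1 d2 :=
        Nat.Coprime.coprime_dvd_left h1.1 (Nat.Coprime.coprime_dvd_right h2.1 hmn)
      rw [Nat.totient_mul hc, ← Nat.div_mul_div_comm h1.1 h2.1,
        mul_comm (m / d1) (n / d2), pow_mul]
      push_cast
      ring
    have hmdvd : (m : ℤ) ∣ ∑ d1 ∈ m.divisors, ∑ d2 ∈ n.divisors,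
        (Nat.totient (d1 * d2) : ℤ) * a ^ (m * n / (d1 * d2)) := by
      rw [Finset.sum_comm]
      apply Finset.dvd_sum
      intro d2 h2
      rw [Finset.sum_congr rfl fun d1 h1 => hrw d1 h1 d2 h2, ← Finset.mul_sum]
      exact Dvd.dvd.mul_left (ihm (a ^ (n / d2))) _
    have hndvd : (n : ℤ) ∣ ∑ d1 ∈ m.divisors, ∑ d2 ∈ n.divisors,
        (Nat.totient (d1 * d2) : ℤ) * a ^ (m * n / (d1 * d2)) := by
      apply Finset.dvd_sum
      intro d1 h1
      have hrw' : ∀ d2 ∈ n.divisors,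
          (Nat.totient (d1 * d2) : ℤ) * a ^ (m * n / (d1 * d2))
            = (Nat.totient d1 : ℤ) *
              ((Nat.totient d2 : ℤ) * (a ^ (m / d1)) ^ (n / d2)) := by
        intro d2 h2
        rw [hrw d1 h1 d2 h2, ← pow_mul, ← pow_mul, mul_comm (n / d2) (m / d1)]
        ring
      rw [Finset.sum_congr rfl hrw', ← Finset.mul_sum]
      exact Dvd.dvd.mul_left (ihn (a ^ (m / d1))) _
    have hcop : IsCoprime (m : ℤ) (n : ℤ) := Nat.isCoprime_iff_coprime.mpr hmn
    exact_mod_cast hcop.mul_dvd hmdvd hndvd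

theorem odd_formula_integrality (n : ℕ) (hn : 0 < n) (hodd : Odd n) :
    n ∣ ∑ d ∈ n.divisors, (2 ^ (n / d - 1) - 1) * Nat.totient d := by
  -- pass to ℤ
  rw [← Int.natCast_dvd_natCast]
  have hcast : ∀ d ∈ n.divisors,
      ((2 ^ (n / d - 1) - 1) * Nat.totient d : ℕ) =
        (((2 : ℤ) ^ (n / d - 1) - 1) * Nat.totient d : ℤ) := by
    intro d hd
    have h1 : 1 ≤ 2 ^ (n / d - 1) := Nat.one_le_two_pow
    push_cast [Nat.cast_sub h1]
    ring
  rw [Nat.cast_sum, Finset.sum_congr rfl hcast]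
  -- key divisibilities
  have h1 : (n : ℤ) ∣ ∑ d ∈ n.divisors, (Nat.totient d : ℤ) * 2 ^ (n / d) :=
    necklace n 2
  have h2 : (n : ℤ) ∣ ∑ d ∈ n.divisors, (Nat.totient d : ℤ) * 2 := by
    rw [← Finset.sum_mul]
    apply Dvd.dvd.mul_right
    norm_cast
    exact ⟨1, (Nat.sum_totient n).symm ▸ (mul_one n).symm⟩
  have h3 : (n : ℤ) ∣ 2 * ∑ d ∈ n.divisors, ((2 : ℤ) ^ (n / d - 1) - 1) * Nat.totient d := by
    have heq : 2 * (∑ d ∈ n.divisors, ((2 : ℤ) ^ (n / d - 1) - 1) * Nat.totient d)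
        = (∑ d ∈ n.divisors, (Nat.totient d : ℤ) * 2 ^ (n / d))
          - ∑ d ∈ n.divisors, (Nat.totient d : ℤ) * 2 := by
      rw [Finset.mul_sum, ← Finset.sum_sub_distrib]
      refine Finset.sum_congr rfl fun d hd => ?_
      rw [Nat.mem_divisors] at hd
      have hd1 : 1 ≤ n / d := Nat.one_le_div_iff (Nat.pos_of_dvd_of_pos hd.1 hn)
        |>.mpr (Nat.le_of_dvd hn hd.1)
      have : (2 : ℤ) ^ (n / d) = 2 * 2 ^ (n / d - 1) := by
        rw [← pow_succ']
        congr 1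
        omega
      rw [this]
      ring
    rw [heq]
    exact dvd_sub h1 h2
  have hcop : IsCoprime (n : ℤ) (2 : ℤ) := by
    rw [Int.isCoprime_iff_gcd_eq_one]
    rcases hodd with ⟨k, hk⟩
    subst hk
    simp [Int.gcd]

  exact hcop.dvd_of_dvd_mul_left h3
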